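/- arXiv:1102.1833 — 2 statements merged into one kernel-verified Lean document; each statement's English description precedes it below -/
import Mathlib

section
/- Cauchy–Kovalevskaya extension of a polynomial: if g : ℝ^m → ℝ_{0,m} is a polynomial of degree d, then CK[g](x_0, \underline x) := Σ_{j=0}^{d} ((−x_0)^j / j!) ∂_{\underline x}^j g(\underline x) is monogenic in ℝ^{m+1}, i.e., ∂_x CK[g] = 0, and CK[g](0, \underline x) = g(\underline x). -/
open Finset

variable {m : ℕ} {A : Type*} [NormedRing A] [NormedAlgebra ℝ A]

/-- The Dirac operator ∂_{\underline x} = Σ_j e_j ∂_{x_j} on A-valued functions on ℝ^m,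
where `e : Fin m → A` are the Clifford generators acting by left multiplication. -/
noncomputable def Dirac (e : Fin m → A) (f : EuclideanSpace ℝ (Fin m) → A)
    (x : EuclideanSpace ℝ (Fin m)) : A :=
  ∑ j, e j * fderiv ℝ f x (EuclideanSpace.single j 1)

/-- The generalized Cauchy–Riemann operator ∂_x = ∂_{x_0} + Σ_j e_j ∂_{x_j}
on A-valued functions on ℝ^{m+1} = ℝ × ℝ^m. -/
noncomputable def CR (e : Fin m → A) (f : ℝ × EuclideanSpace ℝ (Fin m) → A)
    (p : ℝ × EuclideanSpace ℝ (Fin m)) : A :=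
  fderiv ℝ f p (1, 0) + ∑ j, e j * fderiv ℝ f p (0, EuclideanSpace.single j 1)

/-- The conjugate Cauchy–Riemann operator \overline∂_x = ∂_{x_0} − Σ_j e_j ∂_{x_j}. -/
noncomputable def CRbar (e : Fin m → A) (f : ℝ × EuclideanSpace ℝ (Fin m) → A)
    (p : ℝ × EuclideanSpace ℝ (Fin m)) : A :=
  fderiv ℝ f p (1, 0) - ∑ j, e j * fderiv ℝ f p (0, EuclideanSpace.single j 1)

/-- The Laplacian Δ = Σ_{j=0}^m ∂_{x_j}² on ℝ^{m+1} = ℝ × ℝ^m. -/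
noncomputable def Lap (f : ℝ × EuclideanSpace ℝ (Fin m) → A)
    (p : ℝ × EuclideanSpace ℝ (Fin m)) : A :=
  fderiv ℝ (fun q => fderiv ℝ f q (1, 0)) p (1, 0) +
    ∑ j, fderiv ℝ (fun q => fderiv ℝ f q (0, EuclideanSpace.single j 1)) p
      (0, EuclideanSpace.single j 1)

/-- The Clifford vector \underline x = Σ_j x_j e_j associated to x ∈ ℝ^m. -/
noncomputable def vec (e : Fin m → A) (x : EuclideanSpace ℝ (Fin m)) : A :=
  ∑ j, x j • e j

/-- g : ℝ^m → A is a polynomial map of degree at most d. -/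
def IsPolyDeg (d : ℕ) (g : EuclideanSpace ℝ (Fin m) → A) : Prop :=
  ∃ (S : Finset (Fin m →₀ ℕ)) (c : (Fin m →₀ ℕ) → A),
    (∀ α ∈ S, (α.sum fun _ n => n) ≤ d) ∧
    ∀ x, g x = ∑ α ∈ S, (∏ j, x j ^ α j) • c α

/-- The Cauchy–Kovalevskaya extension CK[g](x_0,\underline x)
= Σ_{j=0}^{d} ((−x_0)^j/j!) ∂_{\underline x}^j g(\underline x) of a polynomial of degree d. -/
noncomputable def CKfin (e : Fin m → A) (d : ℕ) (g : EuclideanSpace ℝ (Fin m) → A)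
    (p : ℝ × EuclideanSpace ℝ (Fin m)) : A :=
  ∑ j ∈ Finset.range (d + 1),
    (((-p.1) ^ j / j.factorial : ℝ)) • (Dirac e)^[j] g p.2


def mymono (α : Fin m →₀ ℕ) (x : EuclideanSpace ℝ (Fin m)) : ℝ := ∏ j, x j ^ α j

noncomputable def mymonoD (α : Fin m →₀ ℕ) (x : EuclideanSpace ℝ (Fin m)) :
    EuclideanSpace ℝ (Fin m) →L[ℝ] ℝ :=
  ∑ i, (∏ j ∈ univ.erase i, x j ^ α j) • (((α i : ℝ) * x i ^ (α i - 1)) • EuclideanSpace.proj i)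

lemma mymono_hasFDerivAt (α : Fin m →₀ ℕ) (x : EuclideanSpace ℝ (Fin m)) :
    HasFDerivAt (mymono α) (mymonoD α x) x := by
  have h : ∀ i ∈ (univ : Finset (Fin m)), HasFDerivAt (fun x : EuclideanSpace ℝ (Fin m) => x i ^ α i)
      (((α i : ℝ) * x i ^ (α i - 1)) • EuclideanSpace.proj (𝕜 := ℝ) i) x := by
    intro i _
    have h1 : HasFDerivAt (fun x : EuclideanSpace ℝ (Fin m) => x i)
        (EuclideanSpace.proj (𝕜 := ℝ) i) x := (EuclideanSpace.proj (𝕜 := ℝ) i).hasFDerivAt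
    have h2 := (hasDerivAt_pow (α i) (x i)).comp_hasFDerivAt x h1
    exact h2
  exact HasFDerivAt.finset_prod h


lemma mymonoD_single (α : Fin m →₀ ℕ) (x : EuclideanSpace ℝ (Fin m)) (k : Fin m) :
    mymonoD α x (EuclideanSpace.single k 1) =
      (α k : ℝ) * mymono (α - Finsupp.single k 1) x := by
  have hproj : ∀ i, (EuclideanSpace.proj (𝕜 := ℝ) i) (EuclideanSpace.single k 1) =
      if i = k then 1 else 0 := by
    intro i
    simp [EuclideanSpace.single_apply]
  rw [mymonoD]
  rw [ContinuousLinearMap.sum_apply]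
  have : ∀ i ∈ (univ : Finset (Fin m)),
      ((∏ j ∈ univ.erase i, x j ^ α j) • (((α i : ℝ) * x i ^ (α i - 1)) • EuclideanSpace.proj (𝕜 := ℝ) i)) (EuclideanSpace.single k 1)
      = if i = k then (∏ j ∈ univ.erase i, x j ^ α j) * ((α i : ℝ) * x i ^ (α i - 1)) else 0 := by
    intro i _
    rw [ContinuousLinearMap.smul_apply, ContinuousLinearMap.smul_apply, hproj]
    by_cases h : i = k <;> simp [h, mul_comm]
  rw [Finset.sum_congr rfl this, Finset.sum_ite_eq' univ k]
  simp only [mem_univ, if_true]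
  -- now : (∏ j ∈ univ.erase k, x j ^ α j) * ((α k) * x k ^ (α k - 1)) = α k * mymono (α - single k 1) x
  rcases Nat.eq_zero_or_pos (α k) with h0 | hpos
  · simp [h0]
  · have happ : ∀ j, ((α - Finsupp.single k 1 : Fin m →₀ ℕ)) j = α j - (if j = k then 1 else 0) := by
      intro j; rw [Finsupp.tsub_apply, Finsupp.single_apply]
      simp [eq_comm]
    have : mymono (α - Finsupp.single k 1) x = x k ^ (α k - 1) * ∏ j ∈ univ.erase k, x j ^ α j := by
      rw [mymono, ← Finset.mul_prod_erase univ _ (mem_univ k)]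
      congr 1
      · rw [happ k]; simp
      · exact Finset.prod_congr rfl fun j hj => by
          rw [happ j, if_neg (Finset.mem_erase.mp hj).1]; simp
    rw [this]; ring

lemma mydeg (α : Fin m →₀ ℕ) : (α.sum fun _ n => n) = ∑ j, α j :=
  Finsupp.sum_fintype _ _ (fun _ => rfl)

lemma mypoly_hasFDerivAt {g : EuclideanSpace ℝ (Fin m) → A} {S : Finset (Fin m →₀ ℕ)}
    {c : (Fin m →₀ ℕ) → A} (hg : ∀ x, g x = ∑ α ∈ S, mymono α x • c α)
    (x : EuclideanSpace ℝ (Fin m)) :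
    HasFDerivAt g (∑ α ∈ S, (mymonoD α x).smulRight (c α)) x := by
  have hgf : g = fun x => ∑ α ∈ S, mymono α x • c α := funext hg
  rw [hgf]
  exact HasFDerivAt.fun_sum fun α _ => (mymono_hasFDerivAt α x).smul_const (c α)

lemma mypoly_fderiv {g : EuclideanSpace ℝ (Fin m) → A} {S : Finset (Fin m →₀ ℕ)}
    {c : (Fin m →₀ ℕ) → A} (hg : ∀ x, g x = ∑ α ∈ S, mymono α x • c α)
    (x : EuclideanSpace ℝ (Fin m)) (v : EuclideanSpace ℝ (Fin m)) :
    fderiv ℝ g x v = ∑ α ∈ S, mymonoD α x v • c α := by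
  rw [(mypoly_hasFDerivAt hg x).fderiv]
  simp [ContinuousLinearMap.sum_apply]

lemma mydirac_rep (e : Fin m → A) {g : EuclideanSpace ℝ (Fin m) → A} {S : Finset (Fin m →₀ ℕ)}
    {c : (Fin m →₀ ℕ) → A} (hg : ∀ x, g x = ∑ α ∈ S, mymono α x • c α)
    (x : EuclideanSpace ℝ (Fin m)) :
    Dirac e g x = ∑ q ∈ (S ×ˢ (univ : Finset (Fin m))).filter (fun q => q.1 q.2 ≠ 0),
      mymono (q.1 - Finsupp.single q.2 1) x • ((q.1 q.2 : ℝ) • (e q.2 * c q.1)) := by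
  have step : Dirac e g x = ∑ k, ∑ α ∈ S,
      mymono (α - Finsupp.single k 1) x • ((α k : ℝ) • (e k * c α)) := by
    rw [Dirac]
    refine Finset.sum_congr rfl fun k _ => ?_
    rw [mypoly_fderiv hg, Finset.mul_sum]
    refine Finset.sum_congr rfl fun α _ => ?_
    rw [mymonoD_single, mul_smul_comm, mul_comm, mul_smul]
  rw [step, Finset.sum_comm, ← Finset.sum_product']
  rw [Finset.sum_filter_of_ne]
  intro q _ hne h
  exact hne (by rw [h]; simp)

lemma myisPolyDeg_of_rep {d : ℕ} {g : EuclideanSpace ℝ (Fin m) → A} {ι : Type*} [DecidableEq ι]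
    (T : Finset ι) (β : ι → (Fin m →₀ ℕ)) (a : ι → A)
    (hβ : ∀ i ∈ T, ((β i).sum fun _ n => n) ≤ d)
    (hg : ∀ x, g x = ∑ i ∈ T, mymono (β i) x • a i) : IsPolyDeg d g := by
  refine ⟨T.image β, fun γ => ∑ i ∈ T.filter (fun i => β i = γ), a i, ?_, ?_⟩
  · intro γ hγ
    obtain ⟨i, hi, rfl⟩ := Finset.mem_image.mp hγ
    exact hβ i hi
  · intro x
    rw [hg]
    rw [← Finset.sum_fiberwise_of_maps_to (fun i hi => Finset.mem_image_of_mem β hi)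
      (fun i => mymono (β i) x • a i)]
    refine Finset.sum_congr rfl fun γ _ => ?_
    rw [Finset.smul_sum]
    exact Finset.sum_congr rfl fun i hi => by
      rw [(Finset.mem_filter.mp hi).2]; rfl

lemma mysub_deg {α : Fin m →₀ ℕ} {k : Fin m} (h : α k ≠ 0) :
    ((α - Finsupp.single k 1).sum fun _ n => n) + 1 = (α.sum fun _ n => n) := by
  rw [mydeg, mydeg]
  have happ : ∀ j, ((α - Finsupp.single k 1 : Fin m →₀ ℕ)) j =
      α j - (if j = k then 1 else 0) := by
    intro j; rw [Finsupp.tsub_apply, Finsupp.single_apply]; simp [eq_comm]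
  rw [← Finset.add_sum_erase univ _ (mem_univ k), ← Finset.add_sum_erase univ α (mem_univ k)]
  have h1 : ((α - Finsupp.single k 1 : Fin m →₀ ℕ)) k = α k - 1 := by rw [happ]; simp
  have h2 : ∑ j ∈ univ.erase k, ((α - Finsupp.single k 1 : Fin m →₀ ℕ)) j
      = ∑ j ∈ univ.erase k, α j :=
    Finset.sum_congr rfl fun j hj => by
      rw [happ, if_neg (Finset.mem_erase.mp hj).1]; simp
  rw [h1, h2]
  omega

lemma mydirac_isPolyDeg (e : Fin m → A) {t : ℕ} {g : EuclideanSpace ℝ (Fin m) → A}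
    (hg : IsPolyDeg t g) : IsPolyDeg (t - 1) (Dirac e g) := by
  obtain ⟨S, c, hdeg, hrep⟩ := hg
  have hrep' : ∀ x, g x = ∑ α ∈ S, mymono α x • c α := hrep
  refine myisPolyDeg_of_rep
    ((S ×ˢ (univ : Finset (Fin m))).filter (fun q => q.1 q.2 ≠ 0))
    (fun q => q.1 - Finsupp.single q.2 1)
    (fun q => (q.1 q.2 : ℝ) • (e q.2 * c q.1)) ?_ ?_
  · intro q hq
    obtain ⟨hq1, hq2⟩ := Finset.mem_filter.mp hq
    have h1 := hdeg q.1 (Finset.mem_product.mp hq1).1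
    have h2 := mysub_deg (α := q.1) (k := q.2) hq2
    omega
  · exact fun x => mydirac_rep e hrep' x

lemma mydirac_zero (e : Fin m → A) {g : EuclideanSpace ℝ (Fin m) → A}
    (hg : IsPolyDeg 0 g) (x : EuclideanSpace ℝ (Fin m)) : Dirac e g x = 0 := by
  obtain ⟨S, c, hdeg, hrep⟩ := hg
  have hrep' : ∀ x, g x = ∑ α ∈ S, mymono α x • c α := hrep
  rw [mydirac_rep e hrep' x]
  refine Finset.sum_eq_zero fun q hq => ?_
  obtain ⟨hq1, hq2⟩ := Finset.mem_filter.mp hq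
  exfalso
  have h1 := hdeg q.1 (Finset.mem_product.mp hq1).1
  rw [mydeg] at h1
  have : q.1 q.2 = 0 := by
    have := Finset.sum_eq_zero_iff.mp (Nat.le_zero.mp h1) q.2 (mem_univ q.2)
    exact this
  exact hq2 this

lemma myiter_isPolyDeg (e : Fin m → A) {d : ℕ} {g : EuclideanSpace ℝ (Fin m) → A}
    (hg : IsPolyDeg d g) : ∀ j, IsPolyDeg (d - j) ((Dirac e)^[j] g) := by
  intro j
  induction j with
  | zero => simpa using hg
  | succ j ih =>
    rw [Function.iterate_succ_apply']
    have := mydirac_isPolyDeg e ih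
    have heq : d - j - 1 = d - (j + 1) := by omega
    rwa [heq] at this

lemma mypoly_differentiable {t : ℕ} {g : EuclideanSpace ℝ (Fin m) → A}
    (hg : IsPolyDeg t g) : Differentiable ℝ g := by
  obtain ⟨S, c, hdeg, hrep⟩ := hg
  exact fun x => (mypoly_hasFDerivAt (fun x => hrep x) x).differentiableAt

/-- for a polynomial g of degree d, CK[g] is monogenic in ℝ^{m+1}
and restricts to g on x_0 = 0. -/
theorem stmt10 (e : Fin m → A)
    (he : ∀ j, e j * e j = -1)
    (hanti : ∀ j k, j ≠ k → e j * e k = -(e k * e j))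
    (d : ℕ) (g : EuclideanSpace ℝ (Fin m) → A) (hg : IsPolyDeg d g) :
    (∀ p, CR e (CKfin e d g) p = 0) ∧
    (∀ x : EuclideanSpace ℝ (Fin m), CKfin e d g (0, x) = g x) := by
  constructor
  · intro p
    have hpol : ∀ j, IsPolyDeg (d - j) ((Dirac e)^[j] g) := myiter_isPolyDeg e hg
    have hdiff : ∀ j, Differentiable ℝ ((Dirac e)^[j] g) :=
      fun j => mypoly_differentiable (hpol j)
    have hφ : ∀ j : ℕ, HasFDerivAt
        (fun q : ℝ × EuclideanSpace ℝ (Fin m) => ((-q.1) ^ j / j.factorial : ℝ))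
        ((((j : ℝ) * (-p.1) ^ (j - 1) * (-1)) / j.factorial) •
          (ContinuousLinearMap.fst ℝ ℝ (EuclideanSpace ℝ (Fin m)))) p := by
      intro j
      have h1 : HasDerivAt (fun t : ℝ => (-t) ^ j / j.factorial)
          (((j : ℝ) * (-p.1) ^ (j - 1) * (-1)) / j.factorial) p.1 :=
        ((hasDerivAt_neg p.1).pow j).div_const _
      exact h1.comp_hasFDerivAt p hasFDerivAt_fst
    have hF : ∀ j, HasFDerivAt
        (fun q : ℝ × EuclideanSpace ℝ (Fin m) => (Dirac e)^[j] g q.2)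
        ((fderiv ℝ ((Dirac e)^[j] g) p.2).comp
          (ContinuousLinearMap.snd ℝ ℝ (EuclideanSpace ℝ (Fin m)))) p :=
      fun j => ((hdiff j p.2).hasFDerivAt).comp p hasFDerivAt_snd
    have hCK : HasFDerivAt (CKfin e d g)
        (∑ j ∈ Finset.range (d + 1),
          (((-p.1) ^ j / j.factorial : ℝ) •
              ((fderiv ℝ ((Dirac e)^[j] g) p.2).comp
                (ContinuousLinearMap.snd ℝ ℝ (EuclideanSpace ℝ (Fin m)))) +
            ((((j : ℝ) * (-p.1) ^ (j - 1) * (-1)) / j.factorial) •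
              (ContinuousLinearMap.fst ℝ ℝ (EuclideanSpace ℝ (Fin m)))).smulRight
              ((Dirac e)^[j] g p.2))) p := by
      have : HasFDerivAt (fun q : ℝ × EuclideanSpace ℝ (Fin m) =>
          ∑ j ∈ Finset.range (d + 1),
            ((-q.1) ^ j / j.factorial : ℝ) • (Dirac e)^[j] g q.2) _ p :=
        HasFDerivAt.fun_sum fun j _ => (hφ j).smul (hF j)
      exact this
    have hDapp : ∀ v : ℝ × EuclideanSpace ℝ (Fin m),
        fderiv ℝ (CKfin e d g) p v = ∑ j ∈ Finset.range (d + 1),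
          (((-p.1) ^ j / j.factorial : ℝ) • fderiv ℝ ((Dirac e)^[j] g) p.2 v.2 +
            ((((j : ℝ) * (-p.1) ^ (j - 1) * (-1)) / j.factorial) * v.1) •
              (Dirac e)^[j] g p.2) := by
      intro v
      rw [hCK.fderiv]
      simp [ContinuousLinearMap.sum_apply, ContinuousLinearMap.add_apply,
        ContinuousLinearMap.smul_apply, ContinuousLinearMap.smulRight_apply,
        ContinuousLinearMap.comp_apply, smul_smul]
    rw [CR, hDapp (1, 0)]
    have h2 : ∀ k, fderiv ℝ (CKfin e d g) p (0, EuclideanSpace.single k 1) =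
        ∑ j ∈ Finset.range (d + 1),
          ((-p.1) ^ j / j.factorial : ℝ) •
            fderiv ℝ ((Dirac e)^[j] g) p.2 (EuclideanSpace.single k 1) := by
      intro k
      rw [hDapp]
      simp
    have hsum2 : ∑ k, e k * fderiv ℝ (CKfin e d g) p (0, EuclideanSpace.single k 1) =
        ∑ j ∈ Finset.range (d + 1),
          ((-p.1) ^ j / j.factorial : ℝ) • (Dirac e)^[j + 1] g p.2 := by
      simp_rw [h2, Finset.mul_sum, mul_smul_comm]
      rw [Finset.sum_comm]
      refine Finset.sum_congr rfl fun j _ => ?_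
      rw [← Finset.smul_sum]
      congr 1
      rw [Function.iterate_succ_apply']
      rfl
    have hsum1 : ∑ j ∈ Finset.range (d + 1),
        (((-p.1) ^ j / j.factorial : ℝ) •
            fderiv ℝ ((Dirac e)^[j] g) p.2 ((1, 0) : ℝ × EuclideanSpace ℝ (Fin m)).2 +
          ((((j : ℝ) * (-p.1) ^ (j - 1) * (-1)) / j.factorial) *
            ((1, 0) : ℝ × EuclideanSpace ℝ (Fin m)).1) • (Dirac e)^[j] g p.2) =
        ∑ i ∈ Finset.range d, (-((-p.1) ^ i / i.factorial : ℝ)) • (Dirac e)^[i + 1] g p.2 := by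
      have hz : ∀ j, ((-p.1) ^ j / j.factorial : ℝ) •
          fderiv ℝ ((Dirac e)^[j] g) p.2 ((1, 0) : ℝ × EuclideanSpace ℝ (Fin m)).2 = 0 := by
        intro j
        simp
      simp_rw [hz, zero_add, mul_one]
      rw [Finset.sum_range_succ']
      simp only [Nat.cast_zero, zero_mul, zero_div, zero_smul, add_zero]
      refine Finset.sum_congr rfl fun i _ => ?_
      congr 1
      rw [Nat.factorial_succ]
      have hne : ((i : ℝ) + 1) ≠ 0 := by positivity
      have hfac : ((i.factorial : ℝ)) ≠ 0 := by
        exact_mod_cast Nat.factorial_ne_zero i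
      push_cast
      field_simp
    rw [hsum1, hsum2, Finset.sum_range_succ]
    have hlast : (Dirac e)^[d + 1] g p.2 = 0 := by
      rw [Function.iterate_succ_apply']
      exact mydirac_zero e (by simpa using hpol d) p.2
    rw [hlast, smul_zero, add_zero, ← Finset.sum_add_distrib]
    refine Finset.sum_eq_zero fun i _ => ?_
    rw [neg_smul]
    exact neg_add_cancel _
  · intro x
    rw [CKfin, Finset.sum_range_succ']
    simp
end

section
/- The function M_2^k(x_0,\underline x) = (x_0² + 2x_0\underline x/(2k+m) + \underline x²/(2k+m)) P_k(\underline x) is monogenic in ℝ^{m+1}, and its hypercomplex derivative satisfies (1/2)\overline∂_x M_2^k = 2(x_0 + \underline x/(2k+m)) P_k(\underline x). -/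
open Finset

variable {m : ℕ} {A : Type*} [NormedRing A] [NormedAlgebra ℝ A]

/-- The Clifford vector as a continuous linear map. -/
noncomputable def vecL (e : Fin m → A) : EuclideanSpace ℝ (Fin m) →L[ℝ] A :=
  ∑ j, (EuclideanSpace.proj j : EuclideanSpace ℝ (Fin m) →L[ℝ] ℝ).smulRight (e j)

lemma vecL_apply (e : Fin m → A) (x : EuclideanSpace ℝ (Fin m)) : vecL e x = vec e x := by
  simp [vecL, vec, ContinuousLinearMap.sum_apply]

lemma vecL_single (e : Fin m → A) (j : Fin m) : vecL e (EuclideanSpace.single j 1) = e j := by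
  simp [vecL, ContinuousLinearMap.sum_apply, EuclideanSpace.single_apply]

lemma euc_decomp (x : EuclideanSpace ℝ (Fin m)) : x = ∑ j, x j • EuclideanSpace.single j 1 := by
  ext i
  have h : (∑ j, x j • EuclideanSpace.single j (1:ℝ)) i
      = ∑ j, (x j • EuclideanSpace.single j (1:ℝ)) i := by
        rw [WithLp.ofLp_sum, Finset.sum_apply]
  rw [h]; simp [EuclideanSpace.single_apply]

lemma poly_diff {d : ℕ} {g : EuclideanSpace ℝ (Fin m) → A} (h : IsPolyDeg d g) :
    Differentiable ℝ g := by
  obtain ⟨S, c, -, hg⟩ := h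
  have hfun : g = fun x => ∑ α ∈ S, (∏ j, x j ^ α j) • c α := funext hg
  rw [hfun]
  apply Differentiable.fun_sum
  intro α _
  have hprod : Differentiable ℝ (fun x : EuclideanSpace ℝ (Fin m) => ∏ j, x j ^ α j) := by
    classical
    induction (Finset.univ : Finset (Fin m)) using Finset.induction with
    | empty => simpa using differentiable_const (1:ℝ)
    | @insert a s ha ih =>
        have heq : (fun x : EuclideanSpace ℝ (Fin m) => ∏ j ∈ insert a s, x j ^ α j)
            = fun x => (x a ^ α a) * ∏ j ∈ s, x j ^ α j := by
          funext x; rw [Finset.prod_insert ha]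
        rw [heq]
        exact (((EuclideanSpace.proj a).differentiable (𝕜:=ℝ)).pow _).mul ih
  exact hprod.smul_const (c α)

lemma swap_lem (e : Fin m → A) (he : ∀ j, e j * e j = -1)
    (hanti : ∀ j k, j ≠ k → e j * e k = -(e k * e j)) (x : EuclideanSpace ℝ (Fin m)) (j : Fin m) :
    e j * vec e x = (-(2 * x j)) • (1:A) - vec e x * e j := by
  have key : e j * vec e x + vec e x * e j = (-(2 * x j)) • (1:A) := by
    rw [vec, Finset.mul_sum, Finset.sum_mul, ← Finset.sum_add_distrib]
    rw [Finset.sum_eq_single j]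
    · rw [mul_smul_comm, smul_mul_assoc, he j]
      module
    · intro i _ hij
      rw [mul_smul_comm, smul_mul_assoc, hanti j i (Ne.symm hij), smul_neg, neg_add_cancel]
    · intro h; exact absurd (Finset.mem_univ j) h
  linear_combination (norm := noncomm_ring) key

lemma sq_comm (e : Fin m → A) (x : EuclideanSpace ℝ (Fin m)) (j : Fin m)
    (h : e j * vec e x = (-(2 * x j)) • (1:A) - vec e x * e j) :
    e j * (vec e x * vec e x) = vec e x * (vec e x * e j) := by
  have h2 : e j * (vec e x * vec e x)
      = (-(2 * x j)) • vec e x - vec e x * (e j * vec e x) := by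
    conv_lhs => rw [← mul_assoc, h]
    rw [sub_mul, smul_mul_assoc, one_mul, mul_assoc]
  rw [h2]
  conv_lhs => rw [h]
  rw [mul_sub, mul_smul_comm, mul_one, sub_sub_cancel]

lemma euler {k : ℕ} {P : EuclideanSpace ℝ (Fin m) → A} (hP : Differentiable ℝ P)
    (hhom : ∀ (t : ℝ) (x : EuclideanSpace ℝ (Fin m)), P (t • x) = t ^ k • P x)
    (x : EuclideanSpace ℝ (Fin m)) :
    ∑ j, x j • fderiv ℝ P x (EuclideanSpace.single j 1) = (k:ℝ) • P x := by
  have hs : HasDerivAt (fun t : ℝ => t • x) x 1 := by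
    simpa using (hasDerivAt_id (1:ℝ)).smul_const x
  have hPf : HasFDerivAt P (fderiv ℝ P x) ((1:ℝ) • x) := by
    rw [one_smul]; exact (hP x).hasFDerivAt
  have h1 : HasDerivAt (fun t : ℝ => P (t • x)) (fderiv ℝ P x x) 1 := by
    exact hPf.comp_hasDerivAt 1 hs
  have h2 : HasDerivAt (fun t : ℝ => P (t • x)) ((k:ℝ) • P x) 1 := by
    have hfun : (fun t : ℝ => P (t • x)) = fun t : ℝ => t ^ k • P x := funext fun t => hhom t x
    rw [hfun]
    simpa using (hasDerivAt_pow k (1:ℝ)).smul_const (P x)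
  have hux : fderiv ℝ P x x = (k:ℝ) • P x := h1.unique h2
  calc ∑ j, x j • fderiv ℝ P x (EuclideanSpace.single j 1)
      = fderiv ℝ P x (∑ j, x j • EuclideanSpace.single j 1) := by
        rw [map_sum]; simp
    _ = fderiv ℝ P x x := by rw [← euc_decomp x]
    _ = (k:ℝ) • P x := hux

/-- M_2^k(x) = (x_0² + 2x_0\underline x/(2k+m) + \underline x²/(2k+m)) P_k
is monogenic in ℝ^{m+1} and (1/2)\overline∂_x M_2^k = 2(x_0 + \underline x/(2k+m)) P_k. -/
theorem stmt13 (e : Fin m → A)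
    (he : ∀ j, e j * e j = -1)
    (hanti : ∀ j k, j ≠ k → e j * e k = -(e k * e j))
    (k : ℕ) (hkm : 1 ≤ 2 * k + m)
    (P : EuclideanSpace ℝ (Fin m) → A)
    (hPpoly : IsPolyDeg k P)
    (hhom : ∀ (t : ℝ) (x : EuclideanSpace ℝ (Fin m)), P (t • x) = t ^ k • P x)
    (hmono : ∀ x, Dirac e P x = 0) :
    (∀ p, CR e
        (fun q => ((q.1 ^ 2) • (1 : A) + (2 * q.1 / (2 * k + m : ℝ)) • vec e q.2 +
          ((2 * k + m : ℝ))⁻¹ • (vec e q.2 ^ 2)) * P q.2) p = 0) ∧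
    (∀ p, (1 / 2 : ℝ) • CRbar e
        (fun q => ((q.1 ^ 2) • (1 : A) + (2 * q.1 / (2 * k + m : ℝ)) • vec e q.2 +
          ((2 * k + m : ℝ))⁻¹ • (vec e q.2 ^ 2)) * P q.2) p =
      (2 : ℝ) • ((p.1 • (1 : A) + ((2 * k + m : ℝ))⁻¹ • vec e p.2) * P p.2)) := by
  have hPd : Differentiable ℝ P := poly_diff hPpoly
  set c : ℝ := (2 * k + m : ℝ) with hcdef
  have hcne : c ≠ 0 := by
    have h1 : (1:ℝ) ≤ ((2 * k + m : ℕ) : ℝ) := by exact_mod_cast hkm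
    push_cast at h1
    rw [hcdef]; intro h; rw [h] at h1; norm_num at h1
  have hfun : (fun q : ℝ × EuclideanSpace ℝ (Fin m) =>
      ((q.1 ^ 2) • (1 : A) + (2 * q.1 / c) • vec e q.2 + c⁻¹ • (vec e q.2 ^ 2)) * P q.2)
      = fun q : ℝ × EuclideanSpace ℝ (Fin m) =>
        (q.1 * q.1) • P q.2 + (2 * q.1 / c) • (vecL e q.2 * P q.2)
          + c⁻¹ • (vecL e q.2 * (vecL e q.2 * P q.2)) := by
    funext q
    rw [vecL_apply, add_mul, add_mul, smul_mul_assoc, smul_mul_assoc, smul_mul_assoc, one_mul,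
      pow_two, pow_two, mul_assoc]
  have main : ∀ p : ℝ × EuclideanSpace ℝ (Fin m),
      fderiv ℝ (fun q : ℝ × EuclideanSpace ℝ (Fin m) =>
        (q.1 * q.1) • P q.2 + (2 * q.1 / c) • (vecL e q.2 * P q.2)
          + c⁻¹ • (vecL e q.2 * (vecL e q.2 * P q.2))) p (1, 0)
        = (2 * p.1) • P p.2 + (2/c) • (vecL e p.2 * P p.2)
      ∧ ∑ j, e j * fderiv ℝ (fun q : ℝ × EuclideanSpace ℝ (Fin m) =>
        (q.1 * q.1) • P q.2 + (2 * q.1 / c) • (vecL e q.2 * P q.2)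
          + c⁻¹ • (vecL e q.2 * (vecL e q.2 * P q.2))) p (0, EuclideanSpace.single j 1)
        = (-(2 * p.1)) • P p.2 - (2/c) • (vecL e p.2 * P p.2) := by
    intro p
    have HP : HasFDerivAt (fun q : ℝ × EuclideanSpace ℝ (Fin m) => P q.2)
        ((fderiv ℝ P p.2).comp (ContinuousLinearMap.snd ℝ ℝ (EuclideanSpace ℝ (Fin m)))) p :=
      ((hPd p.2).hasFDerivAt).comp p hasFDerivAt_snd
    have Hv : HasFDerivAt (fun q : ℝ × EuclideanSpace ℝ (Fin m) => vecL e q.2)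
        ((vecL e).comp (ContinuousLinearMap.snd ℝ ℝ (EuclideanSpace ℝ (Fin m)))) p :=
      (vecL e).hasFDerivAt.comp p hasFDerivAt_snd
    have hsq : HasFDerivAt (fun q : ℝ × EuclideanSpace ℝ (Fin m) => q.1 * q.1)
        (p.1 • ContinuousLinearMap.fst ℝ ℝ (EuclideanSpace ℝ (Fin m)) +
          (ContinuousLinearMap.fst ℝ ℝ (EuclideanSpace ℝ (Fin m))).smulRight p.1) p :=
      hasFDerivAt_fst.mul' hasFDerivAt_fst
    have hlin : HasFDerivAt (fun q : ℝ × EuclideanSpace ℝ (Fin m) => 2 * q.1 / c)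
        ((2/c) • ContinuousLinearMap.fst ℝ ℝ (EuclideanSpace ℝ (Fin m))) p := by
      have hid : (fun q : ℝ × EuclideanSpace ℝ (Fin m) => 2 * q.1 / c)
          = fun q : ℝ × EuclideanSpace ℝ (Fin m) => (2/c) * q.1 := by funext q; ring
      rw [hid]; exact hasFDerivAt_fst.const_mul _
    have Hmul := Hv.mul' HP
    have H1 := hsq.smul HP
    have H2 := hlin.smul Hmul
    have H3 := (Hv.mul' Hmul).const_smul c⁻¹
    have Htot := (H1.add H2).add H3
    have hfd := Htot.fderiv
    beta_reduce at hfd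
    constructor
    · erw [hfd]
      simp [ContinuousLinearMap.add_apply, ContinuousLinearMap.smul_apply,
        ContinuousLinearMap.smulRight_apply, ContinuousLinearMap.comp_apply,
        ContinuousLinearMap.coe_fst', ContinuousLinearMap.coe_snd', smul_eq_mul]
      module
    · have hvj : ∀ j : Fin m, fderiv ℝ (fun q : ℝ × EuclideanSpace ℝ (Fin m) =>
          (q.1 * q.1) • P q.2 + (2 * q.1 / c) • (vecL e q.2 * P q.2)
            + c⁻¹ • (vecL e q.2 * (vecL e q.2 * P q.2))) p (0, EuclideanSpace.single j 1)
          = (p.1 * p.1) • fderiv ℝ P p.2 (EuclideanSpace.single j 1)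
            + (2 * p.1 / c) • (vecL e p.2 * fderiv ℝ P p.2 (EuclideanSpace.single j 1)
                + e j * P p.2)
            + c⁻¹ • (vecL e p.2 * (vecL e p.2 * fderiv ℝ P p.2 (EuclideanSpace.single j 1))
                + vecL e p.2 * (e j * P p.2) + e j * (vecL e p.2 * P p.2)) := by
        intro j
        erw [hfd]
        simp [ContinuousLinearMap.add_apply, ContinuousLinearMap.smul_apply,
          ContinuousLinearMap.smulRight_apply, ContinuousLinearMap.comp_apply,
          ContinuousLinearMap.coe_fst', ContinuousLinearMap.coe_snd', smul_eq_mul, vecL_single,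
          mul_add]
      -- pointwise Clifford facts
      have hswap : ∀ j, e j * vecL e p.2 = (-(2 * p.2 j)) • (1:A) - vecL e p.2 * e j := by
        intro j; rw [vecL_apply]; exact swap_lem e he hanti p.2 j
      have hsqc : ∀ j, e j * (vecL e p.2 * vecL e p.2) = vecL e p.2 * (vecL e p.2 * e j) := by
        intro j; rw [vecL_apply]; exact sq_comm e p.2 j (swap_lem e he hanti p.2 j)
      have hs1 : ∑ j, e j * fderiv ℝ P p.2 (EuclideanSpace.single j 1) = 0 := hmono p.2
      have heul : ∑ j, p.2 j • fderiv ℝ P p.2 (EuclideanSpace.single j 1) = (k:ℝ) • P p.2 :=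
        euler hPd hhom p.2
      have hveP : ∑ j, p.2 j • (e j * P p.2) = vecL e p.2 * P p.2 := by
        rw [vecL_apply, vec, Finset.sum_mul]
        exact Finset.sum_congr rfl fun j _ => (smul_mul_assoc _ _ _).symm
      have hA : ∑ j, e j * (vecL e p.2 * fderiv ℝ P p.2 (EuclideanSpace.single j 1))
          = (-(2 * (k:ℝ))) • P p.2 := by
        calc ∑ j, e j * (vecL e p.2 * fderiv ℝ P p.2 (EuclideanSpace.single j 1))
            = ∑ j, ((-(2 * p.2 j)) • fderiv ℝ P p.2 (EuclideanSpace.single j 1)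
                - vecL e p.2 * (e j * fderiv ℝ P p.2 (EuclideanSpace.single j 1))) := by
              refine Finset.sum_congr rfl fun j _ => ?_
              rw [← mul_assoc, hswap j, sub_mul, smul_mul_assoc, one_mul, mul_assoc]
          _ = (∑ j, (-(2 * p.2 j)) • fderiv ℝ P p.2 (EuclideanSpace.single j 1))
                - vecL e p.2 * ∑ j, e j * fderiv ℝ P p.2 (EuclideanSpace.single j 1) := by
              rw [Finset.sum_sub_distrib, Finset.mul_sum]
          _ = ∑ j, (-2:ℝ) • (p.2 j • fderiv ℝ P p.2 (EuclideanSpace.single j 1)) := by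
              rw [hs1, mul_zero, sub_zero]
              exact Finset.sum_congr rfl fun j _ => by module
          _ = (-(2 * (k:ℝ))) • P p.2 := by
              rw [← Finset.smul_sum, heul]; module
      have hB : ∑ j, e j * (vecL e p.2 *
            (vecL e p.2 * fderiv ℝ P p.2 (EuclideanSpace.single j 1))) = 0 := by
        calc ∑ j, e j * (vecL e p.2 * (vecL e p.2 * fderiv ℝ P p.2 (EuclideanSpace.single j 1)))
            = ∑ j, vecL e p.2 * (vecL e p.2 *
                (e j * fderiv ℝ P p.2 (EuclideanSpace.single j 1))) := by
              refine Finset.sum_congr rfl fun j _ => ?_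
              rw [show vecL e p.2 * (vecL e p.2 * fderiv ℝ P p.2 (EuclideanSpace.single j 1))
                  = (vecL e p.2 * vecL e p.2) * fderiv ℝ P p.2 (EuclideanSpace.single j 1) from
                  (mul_assoc _ _ _).symm,
                ← mul_assoc, hsqc j, mul_assoc, mul_assoc]
          _ = vecL e p.2 * (vecL e p.2 *
                ∑ j, e j * fderiv ℝ P p.2 (EuclideanSpace.single j 1)) := by
              simp only [Finset.mul_sum]
          _ = 0 := by rw [hs1, mul_zero, mul_zero]
      have hC : ∑ j, e j * (vecL e p.2 * (e j * P p.2))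
          = ((m:ℝ) - 2) • (vecL e p.2 * P p.2) := by
        calc ∑ j, e j * (vecL e p.2 * (e j * P p.2))
            = ∑ j, ((-(2 * p.2 j)) • (e j * P p.2) + vecL e p.2 * P p.2) := by
              refine Finset.sum_congr rfl fun j _ => ?_
              rw [← mul_assoc, hswap j, sub_mul, smul_mul_assoc, one_mul, mul_assoc,
                ← mul_assoc (e j) (e j) (P p.2), he j, neg_one_mul, mul_neg, sub_neg_eq_add]
          _ = (∑ j, (-2:ℝ) • (p.2 j • (e j * P p.2))) + (m:ℝ) • (vecL e p.2 * P p.2) := by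
              rw [Finset.sum_add_distrib, Finset.sum_const, card_univ, Fintype.card_fin,
                ← Nat.cast_smul_eq_nsmul ℝ]
              congr 1
              exact Finset.sum_congr rfl fun j _ => by module
          _ = ((m:ℝ) - 2) • (vecL e p.2 * P p.2) := by
              rw [← Finset.smul_sum, hveP]; module
      have hD : ∑ j, e j * (e j * (vecL e p.2 * P p.2))
          = (-(m:ℝ)) • (vecL e p.2 * P p.2) := by
        calc ∑ j, e j * (e j * (vecL e p.2 * P p.2))
            = ∑ j, (-(vecL e p.2 * P p.2)) := by
              refine Finset.sum_congr rfl fun j _ => ?_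
              rw [← mul_assoc, he j, neg_one_mul]
          _ = (-(m:ℝ)) • (vecL e p.2 * P p.2) := by
              rw [Finset.sum_const, card_univ, Fintype.card_fin, ← Nat.cast_smul_eq_nsmul ℝ]
              module
      have hE : ∑ j, e j * (e j * P p.2) = (-(m:ℝ)) • P p.2 := by
        calc ∑ j, e j * (e j * P p.2)
            = ∑ j, (-(P p.2)) := by
              refine Finset.sum_congr rfl fun j _ => ?_
              rw [← mul_assoc, he j, neg_one_mul]
          _ = (-(m:ℝ)) • P p.2 := by
              rw [Finset.sum_const, card_univ, Fintype.card_fin, ← Nat.cast_smul_eq_nsmul ℝ]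
              module
      calc ∑ j, e j * fderiv ℝ (fun q : ℝ × EuclideanSpace ℝ (Fin m) =>
            (q.1 * q.1) • P q.2 + (2 * q.1 / c) • (vecL e q.2 * P q.2)
              + c⁻¹ • (vecL e q.2 * (vecL e q.2 * P q.2))) p (0, EuclideanSpace.single j 1)
          = ∑ j, ((p.1 * p.1) • (e j * fderiv ℝ P p.2 (EuclideanSpace.single j 1))
              + ((2 * p.1 / c) • (e j * (vecL e p.2 * fderiv ℝ P p.2 (EuclideanSpace.single j 1)))
                + (2 * p.1 / c) • (e j * (e j * P p.2)))
              + (c⁻¹ • (e j * (vecL e p.2 *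
                    (vecL e p.2 * fderiv ℝ P p.2 (EuclideanSpace.single j 1))))
                + c⁻¹ • (e j * (vecL e p.2 * (e j * P p.2)))
                + c⁻¹ • (e j * (e j * (vecL e p.2 * P p.2))))) := by
            refine Finset.sum_congr rfl fun j _ => ?_
            rw [hvj j]
            simp only [mul_add, mul_smul_comm]
            module
          _ = (p.1 * p.1) • (∑ j, e j * fderiv ℝ P p.2 (EuclideanSpace.single j 1))
              + ((2 * p.1 / c) • (∑ j, e j * (vecL e p.2 *
                    fderiv ℝ P p.2 (EuclideanSpace.single j 1)))
                + (2 * p.1 / c) • (∑ j, e j * (e j * P p.2)))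
              + (c⁻¹ • (∑ j, e j * (vecL e p.2 *
                    (vecL e p.2 * fderiv ℝ P p.2 (EuclideanSpace.single j 1))))
                + c⁻¹ • (∑ j, e j * (vecL e p.2 * (e j * P p.2)))
                + c⁻¹ • (∑ j, e j * (e j * (vecL e p.2 * P p.2)))) := by
            rw [Finset.sum_add_distrib, Finset.sum_add_distrib, Finset.sum_add_distrib,
              Finset.sum_add_distrib, Finset.sum_add_distrib]
            simp only [Finset.smul_sum]
          _ = (-(2 * p.1)) • P p.2 - (2/c) • (vecL e p.2 * P p.2) := by
            rw [hs1, hA, hB, hC, hD, hE]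
            have hcne' : 2*(k:ℝ)+(m:ℝ) ≠ 0 := by rw [← hcdef]; exact hcne
            rw [hcdef]
            match_scalars <;> field_simp <;> ring
  constructor
  · intro p
    show fderiv ℝ _ p (1, 0) + ∑ j, e j * fderiv ℝ _ p (0, EuclideanSpace.single j 1) = 0
    rw [hfun, (main p).1, (main p).2]
    module
  · intro p
    show (1/2:ℝ) • (fderiv ℝ _ p (1, 0)
        - ∑ j, e j * fderiv ℝ _ p (0, EuclideanSpace.single j 1)) = _
    rw [hfun, (main p).1, (main p).2, add_mul, smul_mul_assoc, one_mul, smul_mul_assoc,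
      ← vecL_apply]
    module
end
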